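/- arXiv:2504.09749 — 3 statements merged into one kernel-verified Lean document; each statement's English description precedes it below -/
import Mathlib

section
/- For a valid grid diagram (σX, σO) of size n, the number of connected components of its grid graph equals the number of orbits of the cyclic subgroup generated by the connection permutation σO⁻¹ * σX acting on Fin n (i.e., the cardinality of the orbit space). This identifies the number of link components of the diagram with the number of cycles of σO⁻¹ * σX. -/
/-- The incidence relation of a grid diagram encoded by permutations `σX, σO`:
the row `Sum.inl i` is related to the column `Sum.inr c` iff `c` is the column of
the `X` marking or of the `O` marking in row `i`. -/
def gridRel {n : ℕ} (σX σO : Equiv.Perm (Fin n)) :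
    (Fin n ⊕ Fin n) → (Fin n ⊕ Fin n) → Prop
  | Sum.inl i, Sum.inr c => c = σX i ∨ c = σO i
  | _, _ => False

/-- The grid graph of a grid diagram: the simple graph on rows and columns,
with a row adjacent to a column iff one of the two markings of that row lies
in that column. -/
def gridGraph {n : ℕ} (σX σO : Equiv.Perm (Fin n)) : SimpleGraph (Fin n ⊕ Fin n) :=
  SimpleGraph.fromRel (gridRel σX σO)

namespace GridAux

variable {n : ℕ} (σX σO : Equiv.Perm (Fin n))

abbrev Q (σX σO : Equiv.Perm (Fin n)) :=
  MulAction.orbitRel.Quotient (Subgroup.zpowers (σO⁻¹ * σX)) (Fin n)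

noncomputable def qmk (i : Fin n) : Q σX σO := Quotient.mk'' i

lemma qmk_sigma (i : Fin n) : qmk σX σO ((σO⁻¹ * σX) i) = qmk σX σO i := by
  apply Quotient.sound'
  rw [MulAction.orbitRel_apply]
  exact ⟨⟨σO⁻¹ * σX, Subgroup.mem_zpowers _⟩, rfl⟩

noncomputable def hmap : (Fin n ⊕ Fin n) → Q σX σO
  | Sum.inl i => qmk σX σO i
  | Sum.inr c => qmk σX σO (σX⁻¹ c)

lemma adj_iff (v w : Fin n ⊕ Fin n) :
    (gridGraph σX σO).Adj v w ↔ v ≠ w ∧ (gridRel σX σO v w ∨ gridRel σX σO w v) :=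
  Iff.rfl

lemma qmk_sigma_inv (i : Fin n) :
    qmk σX σO (σX⁻¹ (σO i)) = qmk σX σO i := by
  have h := qmk_sigma σX σO (σX⁻¹ (σO i))
  rw [show (σO⁻¹ * σX) (σX⁻¹ (σO i)) = i by simp [Equiv.Perm.mul_apply]] at h
  exact h.symm

lemma hmap_rel {v w : Fin n ⊕ Fin n} (h : gridRel σX σO v w) :
    hmap σX σO v = hmap σX σO w := by
  match v, w, h with
  | Sum.inl i, Sum.inr c, h =>
    simp only [hmap]
    rcases h with rfl | rfl
    · rw [← Equiv.Perm.mul_apply, inv_mul_cancel, Equiv.Perm.one_apply]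
    · exact (qmk_sigma_inv σX σO i).symm

lemma hmap_adj {v w : Fin n ⊕ Fin n} (h : (gridGraph σX σO).Adj v w) :
    hmap σX σO v = hmap σX σO w := by
  obtain ⟨-, h | h⟩ := h
  · exact hmap_rel σX σO h
  · exact (hmap_rel σX σO h).symm

lemma hmap_reachable {v w : Fin n ⊕ Fin n} (h : (gridGraph σX σO).Reachable v w) :
    hmap σX σO v = hmap σX σO w := by
  obtain ⟨p⟩ := h
  induction p with
  | nil => rfl
  | cons hadj _ ih => exact (hmap_adj σX σO hadj).trans ih

lemma reachable_inl_sigma (i : Fin n) :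
    (gridGraph σX σO).Reachable (Sum.inl i) (Sum.inl ((σO⁻¹ * σX) i)) := by
  have h1 : (gridGraph σX σO).Adj (Sum.inl i) (Sum.inr (σX i)) :=
    ⟨by simp, Or.inl (Or.inl rfl)⟩
  have h2 : (gridGraph σX σO).Adj (Sum.inl ((σO⁻¹ * σX) i)) (Sum.inr (σX i)) :=
    ⟨by simp, Or.inl (Or.inr (by simp [Equiv.Perm.mul_apply]))⟩
  exact h1.reachable.trans h2.reachable.symm

lemma apply_zpow {α : Type*} (σ : Equiv.Perm α) (k : ℤ) (x : α) :
    σ ((σ ^ k) x) = (σ ^ (k + 1)) x := by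
  rw [show k + 1 = 1 + k by ring, zpow_one_add, Equiv.Perm.mul_apply]

lemma reachable_inl_zpow (k : ℤ) (i : Fin n) :
    (gridGraph σX σO).Reachable (Sum.inl i) (Sum.inl (((σO⁻¹ * σX) ^ k) i)) := by
  induction k using Int.induction_on with
  | zero => simpa using SimpleGraph.Reachable.refl (Sum.inl i : Fin n ⊕ Fin n)
  | succ k ih =>
      refine ih.trans ?_
      have h := reachable_inl_sigma σX σO (((σO⁻¹ * σX) ^ (k : ℤ)) i)
      rw [apply_zpow] at h
      exact h
  | pred k ih =>
      have h := reachable_inl_sigma σX σO (((σO⁻¹ * σX) ^ (-(k : ℤ) - 1)) i)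
      rw [apply_zpow, show (-(k : ℤ) - 1 + 1) = -(k : ℤ) by ring] at h
      exact ih.trans h.symm

noncomputable def compOf (i : Fin n) : (gridGraph σX σO).ConnectedComponent :=
  (gridGraph σX σO).connectedComponentMk (Sum.inl i)

noncomputable def Fmap : Q σX σO → (gridGraph σX σO).ConnectedComponent :=
  Quotient.lift (fun i => compOf σX σO i) (by
    intro a b hab
    have hab' : a ∈ MulAction.orbit (Subgroup.zpowers (σO⁻¹ * σX)) b :=
      (MulAction.orbitRel_apply).mp hab
    obtain ⟨⟨g, hg⟩, hgb⟩ := hab'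
    obtain ⟨k, rfl⟩ := hg
    have : a = ((σO⁻¹ * σX) ^ k) b := hgb.symm
    subst this
    exact (SimpleGraph.ConnectedComponent.sound
      (reachable_inl_zpow σX σO k b)).symm)

end GridAux

/-- The number of connected components of the grid graph of a valid grid diagram
equals the number of orbits on `Fin n` of the cyclic subgroup generated by the
connection permutation `σO⁻¹ * σX`: the number of link components of the diagram
is the number of cycles of `σO⁻¹ * σX`. -/
theorem card_connectedComponent_eq_card_orbits {n : ℕ} (σX σO : Equiv.Perm (Fin n))
    (hvalid : ∀ i, σX i ≠ σO i) :
    Nat.card (gridGraph σX σO).ConnectedComponent =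
      Nat.card (MulAction.orbitRel.Quotient (Subgroup.zpowers (σO⁻¹ * σX)) (Fin n)) := by
  classical
  refine Nat.card_congr ?_
  refine Equiv.ofBijective (fun c => c.lift (GridAux.hmap σX σO)
    (fun v w p _ => GridAux.hmap_reachable σX σO ⟨p⟩)) ⟨?_, ?_⟩
  · intro c d h
    induction c using SimpleGraph.ConnectedComponent.ind with
    | _ v =>
    induction d using SimpleGraph.ConnectedComponent.ind with
    | _ w =>
    simp only [SimpleGraph.ConnectedComponent.lift_mk] at h
    -- reduce to the inl case
    have key : ∀ u : Fin n ⊕ Fin n,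
        ∃ i : Fin n, (gridGraph σX σO).Reachable u (Sum.inl i) ∧
          GridAux.hmap σX σO u = GridAux.qmk σX σO i := by
      rintro (i | c)
      · exact ⟨i, SimpleGraph.Reachable.refl _, rfl⟩
      · refine ⟨σX⁻¹ c, ?_, rfl⟩
        have : (gridGraph σX σO).Adj (Sum.inl (σX⁻¹ c)) (Sum.inr c) :=
          ⟨by simp, Or.inl (Or.inl (by simp))⟩
        exact this.reachable.symm
    obtain ⟨i, hvi, hvq⟩ := key v
    obtain ⟨j, hwj, hwq⟩ := key w
    rw [hvq, hwq] at h
    have hij : (gridGraph σX σO).Reachable (Sum.inl i) (Sum.inl j) := by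
      have := Quotient.exact' h
      have hmem : i ∈ MulAction.orbit (Subgroup.zpowers (σO⁻¹ * σX)) j :=
        (MulAction.orbitRel_apply).mp this
      obtain ⟨⟨g, hg⟩, hgj⟩ := hmem
      obtain ⟨k, rfl⟩ := hg
      have : i = ((σO⁻¹ * σX) ^ k) j := hgj.symm
      subst this
      exact (GridAux.reachable_inl_zpow σX σO k j).symm
    exact SimpleGraph.ConnectedComponent.sound (hvi.trans (hij.trans hwj.symm))
  · intro q
    induction q using Quotient.inductionOn' with
    | h i => exact ⟨(gridGraph σX σO).connectedComponentMk (Sum.inl i), rfl⟩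
end

section
/- A valid grid diagram (σX, σO) of size n has connected grid graph (i.e., it represents a knot, a one-component link) if and only if the subgroup generated by the connection permutation σO⁻¹ * σX acts transitively on Fin n. -/
/-- Project a vertex of the grid graph to a row index: a row to itself,
a column to the row of its `X` marking. -/
def gridToRow {n : ℕ} (σX : Equiv.Perm (Fin n)) : (Fin n ⊕ Fin n) → Fin n
  | Sum.inl i => i
  | Sum.inr c => σX⁻¹ c

lemma grid_adj_pow {n : ℕ} {σX σO : Equiv.Perm (Fin n)} {u v : Fin n ⊕ Fin n}
    (h : (gridGraph σX σO).Adj u v) :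
    ∃ k : ℤ, ((σO⁻¹ * σX) ^ k) (gridToRow σX u) = gridToRow σX v := by
  rw [gridGraph, SimpleGraph.fromRel_adj] at h
  obtain ⟨hne, h | h⟩ := h
  · match u, v with
    | Sum.inl i, Sum.inr c =>
      rcases h with h | h
      · exact ⟨0, by simp [gridToRow, h]⟩
      · refine ⟨-1, ?_⟩
        simp [gridToRow, h, zpow_neg, mul_inv_rev, Equiv.Perm.mul_apply]
    | Sum.inl i, Sum.inl j => exact absurd h (by simp [gridRel])
    | Sum.inr i, Sum.inl j => exact absurd h (by simp [gridRel])
    | Sum.inr i, Sum.inr j => exact absurd h (by simp [gridRel])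
  · match u, v with
    | Sum.inr c, Sum.inl i =>
      rcases h with h | h
      · exact ⟨0, by simp [gridToRow, h]⟩
      · exact ⟨1, by simp [gridToRow, h, Equiv.Perm.mul_apply]⟩
    | Sum.inl i, Sum.inl j => exact absurd h (by simp [gridRel])
    | Sum.inl i, Sum.inr j => exact absurd h (by simp [gridRel])
    | Sum.inr i, Sum.inr j => exact absurd h (by simp [gridRel])

lemma grid_walk_pow {n : ℕ} {σX σO : Equiv.Perm (Fin n)} {u v : Fin n ⊕ Fin n}
    (w : (gridGraph σX σO).Walk u v) :
    ∃ k : ℤ, ((σO⁻¹ * σX) ^ k) (gridToRow σX u) = gridToRow σX v := by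
  induction w with
  | nil => exact ⟨0, rfl⟩
  | cons h _ ih =>
    obtain ⟨k, hk⟩ := grid_adj_pow h
    obtain ⟨m, hm⟩ := ih
    exact ⟨m + k, by rw [zpow_add, Equiv.Perm.mul_apply, hk, hm]⟩

lemma grid_reach_next {n : ℕ} (σX σO : Equiv.Perm (Fin n)) (i : Fin n) :
    (gridGraph σX σO).Reachable (Sum.inl i) (Sum.inl ((σO⁻¹ * σX) i)) := by
  have h1 : (gridGraph σX σO).Adj (Sum.inl i) (Sum.inr (σX i)) := by
    rw [gridGraph, SimpleGraph.fromRel_adj]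
    exact ⟨by simp, Or.inl (Or.inl rfl)⟩
  have h2 : (gridGraph σX σO).Adj (Sum.inl ((σO⁻¹ * σX) i)) (Sum.inr (σX i)) := by
    rw [gridGraph, SimpleGraph.fromRel_adj]
    refine ⟨by simp, Or.inl (Or.inr ?_)⟩
    simp [Equiv.Perm.mul_apply]
  exact h1.reachable.trans h2.reachable.symm

lemma grid_reach_pow_nat {n : ℕ} (σX σO : Equiv.Perm (Fin n)) (k : ℕ) (i : Fin n) :
    (gridGraph σX σO).Reachable (Sum.inl i) (Sum.inl (((σO⁻¹ * σX) ^ k) i)) := by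
  induction k generalizing i with
  | zero => simp only [pow_zero]; exact SimpleGraph.Reachable.refl _
  | succ m ih =>
    have : ((σO⁻¹ * σX) ^ (m + 1)) i = ((σO⁻¹ * σX) ^ m) ((σO⁻¹ * σX) i) := by
      rw [pow_succ, Equiv.Perm.mul_apply]
    rw [this]
    exact (grid_reach_next σX σO i).trans (ih ((σO⁻¹ * σX) i))

lemma grid_reach_pow {n : ℕ} (σX σO : Equiv.Perm (Fin n)) (k : ℤ) (i : Fin n) :
    (gridGraph σX σO).Reachable (Sum.inl i) (Sum.inl (((σO⁻¹ * σX) ^ k) i)) := by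
  cases k with
  | ofNat m => rw [Int.ofNat_eq_coe, zpow_natCast]; exact grid_reach_pow_nat σX σO m i
  | negSucc m =>
    set π := σO⁻¹ * σX
    have h := grid_reach_pow_nat σX σO (m + 1) ((π ^ Int.negSucc m) i)
    have : (π ^ (m + 1)) ((π ^ Int.negSucc m) i) = i := by
      rw [zpow_negSucc]
      exact Equiv.apply_symm_apply _ i
    rw [this] at h
    exact h.symm

lemma grid_reach_col {n : ℕ} (σX σO : Equiv.Perm (Fin n)) (c : Fin n) :
    (gridGraph σX σO).Reachable (Sum.inl (σX⁻¹ c)) (Sum.inr c) := by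
  refine SimpleGraph.Adj.reachable ?_
  rw [gridGraph, SimpleGraph.fromRel_adj]
  exact ⟨by simp, Or.inl (Or.inl (by simp))⟩

/-- A valid grid diagram has connected grid graph (i.e., it represents a knot)
if and only if the cyclic subgroup generated by the connection permutation
`σO⁻¹ * σX` acts transitively on `Fin n`. -/
theorem grid_graph_connected_iff_transitive {n : ℕ} (hn : 0 < n)
    (σX σO : Equiv.Perm (Fin n)) (hvalid : ∀ i, σX i ≠ σO i) :
    (gridGraph σX σO).Connected ↔
      MulAction.IsPretransitive (Subgroup.zpowers (σO⁻¹ * σX)) (Fin n) := by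
  constructor
  · intro hc
    constructor
    intro i j
    obtain ⟨w⟩ := hc.preconnected (Sum.inl i) (Sum.inl j)
    obtain ⟨k, hk⟩ := grid_walk_pow w
    exact ⟨⟨(σO⁻¹ * σX) ^ k, k, rfl⟩, hk⟩
  · intro ht
    have hrow : ∀ i j : Fin n, (gridGraph σX σO).Reachable (Sum.inl i) (Sum.inl j) := by
      intro i j
      obtain ⟨g, hg⟩ := ht.exists_smul_eq i j
      obtain ⟨k, hk⟩ := g.2
      have hk' : (σO⁻¹ * σX) ^ k = (g : Equiv.Perm (Fin n)) := hk
      have hg' : (g : Equiv.Perm (Fin n)) i = j := hg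
      have : ((σO⁻¹ * σX) ^ k) i = j := by rw [hk']; exact hg'
      rw [← this]
      exact grid_reach_pow σX σO k i
    have key : ∀ u : Fin n ⊕ Fin n,
        (gridGraph σX σO).Reachable (Sum.inl (gridToRow σX u)) u := by
      intro u
      match u with
      | Sum.inl i => exact SimpleGraph.Reachable.refl _
      | Sum.inr c => exact grid_reach_col σX σO c
    haveI : Nonempty (Fin n ⊕ Fin n) := ⟨Sum.inl ⟨0, hn⟩⟩
    refine ⟨?_⟩
    intro u v
    exact ((key u).symm.trans (hrow _ _)).trans (key v)
end

section
/- Exchanging the two O markings between rows i and j of a grid diagram is a coherent band attachment on the diagram: let (σX, σO) be a valid grid diagram of size n, let i ≠ j be rows, and assume σO j ≠ σX i and σO i ≠ σX j. Then (σX, σO * Equiv.swap i j) is again a valid grid diagram, its connection permutation equals (Equiv.swap i j) * (σO⁻¹ * σX), and the number of orbits on Fin n of the cyclic subgroup generated by its connection permutation differs from that of σO⁻¹ * σX by exactly one; i.e., this grid move changes the number of link components by exactly one. -/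
open Equiv Equiv.Perm

section Aux

variable {α : Type*} [Fintype α] [DecidableEq α]

private lemma pow_mod_apply (g : Perm α) (x : α) (k i : ℕ) (h : (g ^ k) x = x) :
    (g ^ i) x = (g ^ (i % k)) x := by
  have hq : ∀ q : ℕ, ((g ^ k) ^ q) x = x := by
    intro q
    induction q with
    | zero => rfl
    | succ q ih => rw [pow_succ, Equiv.Perm.mul_apply, h, ih]
  conv_lhs => rw [← Nat.mod_add_div i k]
  rw [pow_add, Equiv.Perm.mul_apply, pow_mul, hq]

private lemma keyE (σ : Perm α) {x y a : α} (hax : ¬σ.SameCycle a x)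
    (hay : ¬σ.SameCycle a y) : ∀ k : ℕ, ((swap x y * σ) ^ k) a = (σ ^ k) a := by
  intro k
  induction k with
  | zero => rfl
  | succ k ih =>
    rw [pow_succ', Equiv.Perm.mul_apply, ih, Equiv.Perm.mul_apply]
    have hx : σ ((σ ^ k) a) ≠ x := by
      intro h
      exact hax ⟨(k + 1 : ℕ), by
        rw [zpow_natCast, pow_succ', Equiv.Perm.mul_apply]; exact h⟩
    have hy : σ ((σ ^ k) a) ≠ y := by
      intro h
      exact hay ⟨(k + 1 : ℕ), by
        rw [zpow_natCast, pow_succ', Equiv.Perm.mul_apply]; exact h⟩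
    rw [swap_apply_of_ne_of_ne hx hy, ← Equiv.Perm.mul_apply, ← pow_succ']

private lemma keyE' (σ : Perm α) {x y a b : α} (hax : ¬σ.SameCycle a x)
    (hay : ¬σ.SameCycle a y) (h : (swap x y * σ).SameCycle a b) : σ.SameCycle a b := by
  obtain ⟨k, -, hk⟩ := h.exists_pow_eq'
  exact ⟨(k : ℤ), by rw [zpow_natCast, ← keyE σ hax hay k]; exact hk⟩

private lemma keyH (σ : Perm α) (x y : α) (k : ℕ)
    (h : ∀ m, 0 < m → m ≤ k → (σ ^ m) x ≠ x ∧ (σ ^ m) x ≠ y) :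
    ((swap x y * σ) ^ k) x = (σ ^ k) x := by
  induction k with
  | zero => rfl
  | succ k ih =>
    rw [pow_succ', Equiv.Perm.mul_apply,
      ih (fun m hm hmk => h m hm (hmk.trans (Nat.le_succ k))), Equiv.Perm.mul_apply]
    have hk1 := h (k + 1) (Nat.succ_pos k) le_rfl
    have hx : σ ((σ ^ k) x) ≠ x := by
      rw [← Equiv.Perm.mul_apply, ← pow_succ']; exact hk1.1
    have hy : σ ((σ ^ k) x) ≠ y := by
      rw [← Equiv.Perm.mul_apply, ← pow_succ']; exact hk1.2
    rw [swap_apply_of_ne_of_ne hx hy, ← Equiv.Perm.mul_apply, ← pow_succ']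

private lemma keyA (σ : Perm α) {x y : α} (hxy : ¬σ.SameCycle x y) :
    (swap x y * σ).SameCycle x y := by
  classical
  have hex : ∃ m, 0 < m ∧ (σ ^ m) x = x :=
    ⟨orderOf σ, orderOf_pos σ, by rw [pow_orderOf_eq_one]; rfl⟩
  set k₀ := Nat.find hex with hk₀def
  have hk₀ := Nat.find_spec hex
  have hmin : ∀ m, 0 < m → m < k₀ → (σ ^ m) x ≠ x := fun m hm hmk h =>
    Nat.find_min hex hmk ⟨hm, h⟩
  have hy : ∀ m : ℕ, (σ ^ m) x ≠ y := fun m h =>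
    hxy ⟨(m : ℤ), by rw [zpow_natCast]; exact h⟩
  have hH : ((swap x y * σ) ^ (k₀ - 1)) x = (σ ^ (k₀ - 1)) x :=
    keyH σ x y (k₀ - 1) (fun m hm hmk =>
      ⟨hmin m hm (lt_of_le_of_lt hmk (Nat.sub_lt hk₀.1 one_pos)), hy m⟩)
  refine ⟨(k₀ : ℤ), ?_⟩
  rw [zpow_natCast]
  have hsucc : k₀ = (k₀ - 1) + 1 := (Nat.succ_pred_eq_of_pos hk₀.1).symm
  rw [hsucc, pow_succ', Equiv.Perm.mul_apply, hH, Equiv.Perm.mul_apply,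
    ← Equiv.Perm.mul_apply σ, ← pow_succ', ← hsucc, hk₀.2, swap_apply_left]

private lemma keyG (σ : Perm α) {x y : α} (hne : x ≠ y) (hxy : σ.SameCycle x y) :
    ¬(swap x y * σ).SameCycle x y := by
  classical
  obtain ⟨m₀, hm₀pos, -, hm₀⟩ := hxy.exists_pow_eq''
  have hex : ∃ m, 0 < m ∧ ((σ ^ m) x = x ∨ (σ ^ m) x = y) := ⟨m₀, hm₀pos, Or.inr hm₀⟩
  set k₀ := Nat.find hex with hk₀def
  have hk₀ := Nat.find_spec hex
  have hmin : ∀ m, 0 < m → m < k₀ → (σ ^ m) x ≠ x ∧ (σ ^ m) x ≠ y := fun m hm hmk =>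
    ⟨fun h => Nat.find_min hex hmk ⟨hm, Or.inl h⟩,
     fun h => Nat.find_min hex hmk ⟨hm, Or.inr h⟩⟩
  have hk₀y : (σ ^ k₀) x = y := by
    rcases hk₀.2 with h | h
    · exfalso
      have h1 : (σ ^ (m₀ % k₀)) x = y := by
        rw [← pow_mod_apply σ x k₀ m₀ h]; exact hm₀
      have hr : m₀ % k₀ < k₀ := Nat.mod_lt _ hk₀.1
      rcases Nat.eq_zero_or_pos (m₀ % k₀) with h0 | h0
      · rw [h0, pow_zero] at h1; exact hne h1
      · exact (hmin _ h0 hr).2 h1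
    · exact h
  have hH : ∀ m, m < k₀ → ((swap x y * σ) ^ m) x = (σ ^ m) x := fun m hmk =>
    keyH σ x y m (fun l hl hlm => hmin l hl (lt_of_le_of_lt hlm hmk))
  have hsucc : k₀ = (k₀ - 1) + 1 := (Nat.succ_pred_eq_of_pos hk₀.1).symm
  have hfix : ((swap x y * σ) ^ k₀) x = x := by
    rw [hsucc, pow_succ', Equiv.Perm.mul_apply,
      hH (k₀ - 1) (Nat.sub_lt hk₀.1 one_pos), Equiv.Perm.mul_apply,
      ← Equiv.Perm.mul_apply σ, ← pow_succ', ← hsucc, hk₀y, swap_apply_right]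
  intro hcon
  obtain ⟨i, -, hik⟩ := hcon.exists_pow_eq'
  have h1 : ((swap x y * σ) ^ (i % k₀)) x = y := by
    rw [← pow_mod_apply _ _ _ _ hfix]; exact hik
  have hr : i % k₀ < k₀ := Nat.mod_lt _ hk₀.1
  rcases Nat.eq_zero_or_pos (i % k₀) with h0 | h0
  · rw [h0, pow_zero] at h1; exact hne h1
  · rw [hH _ hr] at h1
    exact (hmin _ h0 hr).2 h1

private lemma keyB (σ : Perm α) {x y a b : α} (hxy : ¬σ.SameCycle x y)
    (h : σ.SameCycle a b) : (swap x y * σ).SameCycle a b := by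
  have hA : (swap x y * σ).SameCycle x y := keyA σ hxy
  have step : ∀ c, (swap x y * σ).SameCycle c (σ c) := by
    intro c
    rcases eq_or_ne (σ c) x with h1 | h1
    · have hc : (swap x y * σ) c = y := by
        rw [Equiv.Perm.mul_apply, h1, swap_apply_left]
      rw [h1]
      exact (show (swap x y * σ).SameCycle c y from
        ⟨1, by rw [zpow_one]; exact hc⟩).trans hA.symm
    rcases eq_or_ne (σ c) y with h2 | h2
    · have hc : (swap x y * σ) c = x := by
        rw [Equiv.Perm.mul_apply, h2, swap_apply_right]
      rw [h2]
      exact (show (swap x y * σ).SameCycle c x from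
        ⟨1, by rw [zpow_one]; exact hc⟩).trans hA
    · exact ⟨1, by rw [zpow_one, Equiv.Perm.mul_apply, swap_apply_of_ne_of_ne h1 h2]⟩
  obtain ⟨k, -, hk⟩ := h.exists_pow_eq'
  have hall : ∀ m : ℕ, (swap x y * σ).SameCycle a ((σ ^ m) a) := by
    intro m
    induction m with
    | zero => exact SameCycle.refl _ a
    | succ m ih =>
      rw [pow_succ', Equiv.Perm.mul_apply]
      exact ih.trans (step _)
  rw [← hk]
  exact hall k

private lemma merge_count (σ : Perm α) {x y : α} (hne : x ≠ y)
    (hxy : ¬σ.SameCycle x y) :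
    Nat.card (Quotient (SameCycle.setoid σ)) =
      Nat.card (Quotient (SameCycle.setoid (swap x y * σ))) + 1 := by
  classical
  set τ := swap x y * σ with hτ
  let f : Quotient (SameCycle.setoid σ) → Quotient (SameCycle.setoid τ) :=
    Quotient.map id (fun a b h => keyB σ hxy h)
  let Y : Quotient (SameCycle.setoid σ) := Quotient.mk _ y
  have hbij : Function.Bijective
      (fun q : {q : Quotient (SameCycle.setoid σ) // q ≠ Y} => f q.1) := by
    constructor
    · rintro ⟨q1, hq1⟩ ⟨q2, hq2⟩ hf
      obtain ⟨a, rfl⟩ := Quotient.exists_rep q1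
      obtain ⟨b, rfl⟩ := Quotient.exists_rep q2
      have hay : ¬σ.SameCycle a y := fun h => hq1 (Quotient.sound h)
      have hby : ¬σ.SameCycle b y := fun h => hq2 (Quotient.sound h)
      have hab : τ.SameCycle a b := Quotient.exact hf
      apply Subtype.ext
      apply Quotient.sound
      show σ.SameCycle a b
      by_cases hax : σ.SameCycle a x
      · by_cases hbx : σ.SameCycle b x
        · exact hax.trans hbx.symm
        · exact (keyE' σ hbx hby hab.symm).symm
      · exact keyE' σ hax hay hab
    · intro q
      obtain ⟨c, rfl⟩ := Quotient.exists_rep q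
      by_cases hc : σ.SameCycle c y
      · refine ⟨⟨Quotient.mk _ x, fun h => hxy (Quotient.exact h)⟩, ?_⟩
        show f (Quotient.mk _ x) = Quotient.mk _ c
        exact Quotient.sound ((keyA σ hxy).trans (keyB σ hxy hc.symm))
      · exact ⟨⟨Quotient.mk _ c, fun h => hc (Quotient.exact h)⟩, rfl⟩
  have e1 : {q : Quotient (SameCycle.setoid σ) // q ≠ Y} ≃
      Quotient (SameCycle.setoid τ) := Equiv.ofBijective _ hbij
  have e2 : Quotient (SameCycle.setoid σ) ≃
      Option {q : Quotient (SameCycle.setoid σ) // q ≠ Y} :=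
    (Equiv.optionSubtypeNe Y).symm
  haveI : Fintype {q : Quotient (SameCycle.setoid σ) // q ≠ Y} := Fintype.ofFinite _
  haveI : Fintype (Quotient (SameCycle.setoid σ)) := Fintype.ofFinite _
  haveI : Fintype (Quotient (SameCycle.setoid τ)) := Fintype.ofFinite _
  rw [Nat.card_congr e2, Nat.card_eq_fintype_card, Nat.card_eq_fintype_card,
    Fintype.card_option, ← Nat.card_eq_fintype_card, ← Nat.card_eq_fintype_card,
    Nat.card_congr e1]

private lemma orbit_count_eq (g : Perm α) :
    Nat.card (MulAction.orbitRel.Quotient (Subgroup.zpowers g) α) =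
      Nat.card (Quotient (SameCycle.setoid g)) := by
  apply Nat.card_congr
  apply Quotient.congrRight
  intro a b
  rw [MulAction.orbitRel_apply, MulAction.mem_orbit_iff]
  constructor
  · rintro ⟨⟨u, hu⟩, h⟩
    obtain ⟨k, rfl⟩ := Subgroup.mem_zpowers_iff.mp hu
    exact (show g.SameCycle b a from ⟨k, h⟩).symm
  · rintro ⟨k, hk⟩
    refine ⟨⟨g ^ (-k), Subgroup.mem_zpowers_iff.mpr ⟨-k, rfl⟩⟩, ?_⟩
    show (g ^ (-k)) b = a
    rw [← hk, zpow_neg, Equiv.Perm.inv_def, Equiv.symm_apply_apply]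

end Aux

/-- Exchanging the two `O` markings between rows `i` and `j` of a grid diagram is a
coherent band attachment: the result `(σX, σO * Equiv.swap i j)` is again a valid
grid diagram, its connection permutation is `Equiv.swap i j * (σO⁻¹ * σX)`, and the
number of orbits on `Fin n` of the cyclic subgroup generated by the connection
permutation (i.e., the number of link components) changes by exactly one. -/
theorem swap_O_markings_is_coherent_band {n : ℕ} (σX σO : Equiv.Perm (Fin n))
    (hvalid : ∀ k, σX k ≠ σO k) (i j : Fin n) (hij : i ≠ j)
    (h1 : σO j ≠ σX i) (h2 : σO i ≠ σX j) :
    (∀ k, σX k ≠ (σO * Equiv.swap i j) k) ∧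
    (σO * Equiv.swap i j)⁻¹ * σX = Equiv.swap i j * (σO⁻¹ * σX) ∧
    (Nat.card (MulAction.orbitRel.Quotient
        (Subgroup.zpowers (Equiv.swap i j * (σO⁻¹ * σX))) (Fin n)) =
      Nat.card (MulAction.orbitRel.Quotient
        (Subgroup.zpowers (σO⁻¹ * σX)) (Fin n)) + 1 ∨
     Nat.card (MulAction.orbitRel.Quotient
        (Subgroup.zpowers (σO⁻¹ * σX)) (Fin n)) =
      Nat.card (MulAction.orbitRel.Quotient
        (Subgroup.zpowers (Equiv.swap i j * (σO⁻¹ * σX))) (Fin n)) + 1) := by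
  classical
  refine ⟨?_, ?_, ?_⟩
  · intro k
    rcases eq_or_ne k i with rfl | hki
    · rw [Equiv.Perm.mul_apply, swap_apply_left]
      exact h1.symm
    rcases eq_or_ne k j with rfl | hkj
    · rw [Equiv.Perm.mul_apply, swap_apply_right]
      exact h2.symm
    · rw [Equiv.Perm.mul_apply, swap_apply_of_ne_of_ne hki hkj]
      exact hvalid k
  · rw [mul_inv_rev, swap_inv, mul_assoc]
  · by_cases h : (σO⁻¹ * σX).SameCycle i j
    · left
      have hG : ¬(Equiv.swap i j * (σO⁻¹ * σX)).SameCycle i j := keyG _ hij h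
      have hmc := merge_count (Equiv.swap i j * (σO⁻¹ * σX)) hij hG
      rw [← mul_assoc (Equiv.swap i j) (Equiv.swap i j) (σO⁻¹ * σX),
        Equiv.swap_mul_self, one_mul] at hmc
      rw [orbit_count_eq, orbit_count_eq]
      exact hmc
    · right
      rw [orbit_count_eq, orbit_count_eq]
      exact merge_count (σO⁻¹ * σX) hij h
end
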